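/- Let n ≥ 3, m a divisor of n, and Cay(ℤ_n, S) a circulant graph with S_0 satisfying (S_0 − S_0) ∩ ⟨n/m⟩ = {0}, where ⟨n/m⟩ is the subgroup of ℤ_n of order m. Then each coset of ⟨n/m⟩ in ℤ_n is an independent set of Cay(ℤ_n, S), and the canonical projection ℤ_n → ℤ_n/⟨n/m⟩ is a covering map from Cay(ℤ_n, S) onto Cay(ℤ_n/⟨n/m⟩, S/⟨n/m⟩). -/

import Mathlib

open Pointwise

theorem stmt_14 (n m : ℕ) (hn : 3 ≤ n) (hm : m ∣ n)
    (S : Set (ZMod n)) (h0 : (0 : ZMod n) ∉ S) (hsym : ∀ s ∈ S, -s ∈ S)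
    (H : AddSubgroup (ZMod n))
    (hHdef : H = AddSubgroup.zmultiples (((n / m : ℕ) : ZMod n)))
    (hint : (insert (0 : ZMod n) S - insert (0 : ZMod n) S) ∩ (H : Set (ZMod n)) = {0}) :
    -- each coset of H is an independent set of Cay(ℤ_n, S)
    (∀ g : ZMod n, ∀ x ∈ (fun h => g + h) '' (H : Set (ZMod n)),
        ∀ y ∈ (fun h => g + h) '' (H : Set (ZMod n)),
          ¬ (SimpleGraph.fromRel (fun a b : ZMod n => a - b ∈ S)).Adj x y) ∧
    -- the canonical projection is a covering map onto Cay(ℤ_n/H, S/H)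
    (Function.Surjective (QuotientAddGroup.mk : ZMod n → ZMod n ⧸ H) ∧
      ∀ v : ZMod n,
        Set.BijOn (QuotientAddGroup.mk : ZMod n → ZMod n ⧸ H)
          ((SimpleGraph.fromRel (fun a b : ZMod n => a - b ∈ S)).neighborSet v)
          ((SimpleGraph.fromRel (fun a b : ZMod n ⧸ H =>
              a - b ∈ (QuotientAddGroup.mk : ZMod n → ZMod n ⧸ H) '' S)).neighborSet
            (QuotientAddGroup.mk v))) := by
  -- key: differences of elements of S₀ lying in H are zero
  have key : ∀ a b : ZMod n, a ∈ insert (0 : ZMod n) S → b ∈ insert (0 : ZMod n) S →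
      a - b ∈ H → a = b := by
    intro a b ha hb hH
    have hm : a - b ∈ (insert (0 : ZMod n) S - insert (0 : ZMod n) S) ∩ (H : Set (ZMod n)) :=
      ⟨Set.sub_mem_sub ha hb, hH⟩
    rw [hint] at hm
    have : a - b = 0 := hm
    linear_combination this
  have key2 : ∀ a ∈ S, a ∈ H → False := by
    intro a ha hH
    have : a = 0 := key a 0 (Set.mem_insert_iff.2 (Or.inr ha)) (Set.mem_insert 0 S)
      (by simpa using hH)
    exact h0 (this ▸ ha)
  -- key3: for u w with (u-v), (w-v) ∈ S₀, u ≡ w mod H implies u = w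
  have key3 : ∀ v u w : ZMod n, u - v ∈ insert (0 : ZMod n) S → w - v ∈ insert (0 : ZMod n) S →
      u - w ∈ H → u = w := by
    intro v u w hu hw hH
    have := key (u - v) (w - v) hu hw (by simpa [sub_sub_sub_cancel_right] using hH)
    linear_combination this
  have hSsub : S ⊆ insert (0 : ZMod n) S := Set.subset_insert _ _
  refine ⟨?_, QuotientAddGroup.mk_surjective, ?_⟩
  · rintro g x ⟨h1, hh1, rfl⟩ y ⟨h2, hh2, rfl⟩ hadj
    rw [SimpleGraph.fromRel_adj] at hadj
    obtain ⟨hne, hcase⟩ := hadj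
    have hmem : (g + h1) - (g + h2) ∈ H := by
      have : h1 - h2 ∈ H := sub_mem hh1 hh2
      simpa [add_sub_add_left_eq_sub] using this
    rcases hcase with hs | hs
    · exact key2 _ hs hmem
    · exact key2 _ hs (by simpa [neg_sub] using neg_mem hmem)
  · intro v
    refine ⟨?_, ?_, ?_⟩
    · -- MapsTo
      intro u hu
      rw [SimpleGraph.mem_neighborSet, SimpleGraph.fromRel_adj] at hu ⊢
      obtain ⟨hne, hcase⟩ := hu
      constructor
      · intro heq
        have hvu : v - u ∈ H := (QuotientAddGroup.eq_iff_sub_mem).1 heq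
        rcases hcase with hs | hs
        · exact key2 _ hs hvu
        · exact key2 _ hs (by simpa [neg_sub] using neg_mem hvu)
      · rcases hcase with hs | hs
        · exact Or.inl ⟨v - u, hs, by rw [QuotientAddGroup.mk_sub]⟩
        · exact Or.inr ⟨u - v, hs, by rw [QuotientAddGroup.mk_sub]⟩
    · -- InjOn
      intro u hu w hw heq
      rw [SimpleGraph.mem_neighborSet, SimpleGraph.fromRel_adj] at hu hw
      have huv : u - v ∈ insert (0 : ZMod n) S := by
        rcases hu.2 with hs | hs
        · exact hSsub (by simpa [neg_sub] using hsym _ hs)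
        · exact hSsub hs
      have hwv : w - v ∈ insert (0 : ZMod n) S := by
        rcases hw.2 with hs | hs
        · exact hSsub (by simpa [neg_sub] using hsym _ hs)
        · exact hSsub hs
      exact key3 v u w huv hwv ((QuotientAddGroup.eq_iff_sub_mem).1 heq)
    · -- SurjOn
      intro q hq
      rw [SimpleGraph.mem_neighborSet, SimpleGraph.fromRel_adj] at hq
      obtain ⟨hne, hcase⟩ := hq
      rcases hcase with ⟨s, hs, hms⟩ | ⟨s, hs, hms⟩
      · -- (mk v) - q = mk s, so q = mk (v - s)
        refine ⟨v - s, ?_, ?_⟩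
        · rw [SimpleGraph.mem_neighborSet, SimpleGraph.fromRel_adj]
          refine ⟨?_, Or.inl (by simpa using hs)⟩
          intro heq
          apply h0
          have : s = 0 := by linear_combination heq
          exact this ▸ hs
        · rw [QuotientAddGroup.mk_sub, hms]
          abel
      · -- q - (mk v) = mk s, so q = mk (v + s)
        refine ⟨v + s, ?_, ?_⟩
        · rw [SimpleGraph.mem_neighborSet, SimpleGraph.fromRel_adj]
          refine ⟨?_, Or.inr (by simpa using hs)⟩
          intro heq
          apply h0
          have : s = 0 := by linear_combination -heq
          exact this ▸ hs
        · rw [QuotientAddGroup.mk_add, hms]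
          abel
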